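/- Let K ⊂ ℝⁿ be compact, V : ℝⁿ → ℝ continuous and nonnegative on K, A ∈ ℝ^{n×n}, and let g : ℝⁿ → ℝⁿ satisfy g(K) ⊆ K and V(g(y)) ≤ γ̄ V(y) for all y ∈ K, where 0 < γ̄ < 1. Fix any γ ∈ (γ̄, 1). Then for every μ > 0 there exists δ > 0 such that for all x ∈ K and all e, d ∈ ℝⁿ with ‖e‖ ≤ δ and ‖d‖ ≤ δ, if x + e ∈ K and the perturbed successor x⁺ := g(x+e) − A e + d lies in K, then V(x⁺) ≤ max{μ, γ V(x)}. -/

import Mathlib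

open scoped Matrix

/-- Matrix-vector product, viewed as a map on Euclidean space. -/
def matVec {n : ℕ} (A : Matrix (Fin n) (Fin n) ℝ) (x : EuclideanSpace ℝ (Fin n)) :
    EuclideanSpace ℝ (Fin n) :=
  WithLp.toLp 2 (A.mulVec (WithLp.ofLp x))

lemma matVec_bound {n : ℕ} (A : Matrix (Fin n) (Fin n) ℝ) :
    ∃ C : ℝ, 0 ≤ C ∧ ∀ e : EuclideanSpace ℝ (Fin n), ‖matVec A e‖ ≤ C * ‖e‖ := by
  let L : EuclideanSpace ℝ (Fin n) →L[ℝ] EuclideanSpace ℝ (Fin n) :=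
    LinearMap.toContinuousLinearMap (Matrix.toEuclideanLin A)
  refine ⟨‖L‖, norm_nonneg _, fun e => ?_⟩
  have h : L e = matVec A e := by
    simp [L, matVec, Matrix.toEuclideanLin_apply]
  rw [← h]; exact L.le_opNorm e

/-- (Perturbed decrease of the value function.) Let `K` be compact,
`V` continuous and nonnegative on `K`, and `g` map `K` into `K` with `V(g(y)) ≤ γ̄ V(y)`
on `K`, `0 < γ̄ < 1`. Fix `γ ∈ (γ̄, 1)`. Then for every `μ > 0` there is `δ > 0` such
that whenever `x ∈ K`, `‖e‖ ≤ δ`, `‖d‖ ≤ δ`, `x + e ∈ K`, and the perturbed successor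
`x⁺ = g(x+e) − Ae + d` lies in `K`, one has `V(x⁺) ≤ max{μ, γ V(x)}`. -/
theorem stmt_16 {n : ℕ} (K : Set (EuclideanSpace ℝ (Fin n))) (hK : IsCompact K)
    (V : EuclideanSpace ℝ (Fin n) → ℝ) (hVcont : ContinuousOn V K)
    (hVnonneg : ∀ y ∈ K, 0 ≤ V y)
    (A : Matrix (Fin n) (Fin n) ℝ)
    (g : EuclideanSpace ℝ (Fin n) → EuclideanSpace ℝ (Fin n))
    (hg : ∀ y ∈ K, g y ∈ K)
    (γbar : ℝ) (hγbar0 : 0 < γbar) (hγbar1 : γbar < 1)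
    (hdec : ∀ y ∈ K, V (g y) ≤ γbar * V y)
    (γ : ℝ) (hγ : γbar < γ ∧ γ < 1) :
    ∀ μ : ℝ, 0 < μ → ∃ δ : ℝ, 0 < δ ∧
      ∀ x ∈ K, ∀ e d : EuclideanSpace ℝ (Fin n), ‖e‖ ≤ δ → ‖d‖ ≤ δ →
        x + e ∈ K →
        g (x + e) - matVec A e + d ∈ K →
        V (g (x + e) - matVec A e + d) ≤ max μ (γ * V x) := by
  intro μ hμ
  obtain ⟨hγ1, hγ2⟩ := hγ
  obtain ⟨C, hC0, hC⟩ := matVec_bound A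
  have hγpos : 0 < γ := lt_trans hγbar0 hγ1
  set ε : ℝ := μ * (γ - γbar) / (2 * γ) with hε_def
  have hεpos : 0 < ε := by
    apply div_pos (mul_pos hμ (by linarith)) (by linarith)
  have hUC : UniformContinuousOn V K :=
    hK.uniformContinuousOn_of_continuous hVcont
  obtain ⟨δ₀, hδ₀pos, hδ₀⟩ := (Metric.uniformContinuousOn_iff.mp hUC) ε hεpos
  refine ⟨δ₀ / (2 * (C + 1)), by positivity, ?_⟩
  intro x hx e d he hd hxe hplus
  set z := g (x + e) - matVec A e + d with hz_def
  have hgxe : g (x + e) ∈ K := hg _ hxe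
  have hδle : δ₀ / (2 * (C + 1)) ≤ δ₀ / 2 := by
    apply div_le_div_of_nonneg_left (le_of_lt hδ₀pos) (by norm_num) (by linarith)
  -- distance from x+e to x
  have h1 : dist (V (x + e)) (V x) < ε := by
    apply hδ₀ _ hxe _ hx
    have : dist (x + e) x = ‖e‖ := by
      rw [dist_eq_norm]; congr 1; abel
    rw [this]
    calc ‖e‖ ≤ δ₀ / (2 * (C + 1)) := he
      _ ≤ δ₀ / 2 := hδle
      _ < δ₀ := by linarith
  -- distance from z to g(x+e)
  have h2 : dist (V z) (V (g (x + e))) < ε := by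
    apply hδ₀ _ hplus _ hgxe
    have hznorm : dist z (g (x + e)) = ‖d - matVec A e‖ := by
      rw [dist_eq_norm]; congr 1; rw [hz_def]; abel
    rw [hznorm]
    have hAe : ‖matVec A e‖ ≤ C * ‖e‖ := hC e
    calc ‖d - matVec A e‖ ≤ ‖d‖ + ‖matVec A e‖ := norm_sub_le _ _
      _ ≤ δ₀ / (2 * (C + 1)) + C * (δ₀ / (2 * (C + 1))) := by
          refine add_le_add hd (le_trans hAe ?_)
          exact mul_le_mul_of_nonneg_left he hC0
      _ = (C + 1) * (δ₀ / (2 * (C + 1))) := by ring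
      _ = δ₀ / 2 := by field_simp
      _ < δ₀ := by linarith
  have hVxe : V (x + e) ≤ V x + ε := by
    have h1' : |V (x + e) - V x| < ε := by rwa [Real.dist_eq] at h1
    linarith [(abs_sub_lt_iff.mp h1').1]
  have hVz : V z ≤ V (g (x + e)) + ε := by
    have h2' : |V z - V (g (x + e))| < ε := by rwa [Real.dist_eq] at h2
    linarith [(abs_sub_lt_iff.mp h2').1]
  have key : V z ≤ γbar * V x + 2 * ε := by
    have := hdec _ hxe
    nlinarith [hVnonneg _ hxe]
  by_cases hcase : 2 * ε ≤ (γ - γbar) * V x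
  · refine le_trans ?_ (le_max_right _ _)
    nlinarith
  · refine le_trans ?_ (le_max_left _ _)
    push_neg at hcase
    have hVx0 := hVnonneg _ hx
    have : γbar * V x + 2 * ε ≤ μ := by
      have hεμ : 2 * ε * γ = μ * (γ - γbar) := by
        rw [hε_def]; field_simp
      nlinarith
    linarith
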